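/- Let a, b, c be integers ≥ 2 with 1/a + 1/b + 1/c < 1, let T = T_{a,b,c} be the triangle group with generators x, y, and let ρ : T → GL(V) be a representation of T on a finite-dimensional complex vector space V. Let i* denote the dimension of the space of invariants of the dual representation of ρ on the dual space V*, and for t ∈ T let V^t denote the fixed-point space of ρ(t) in V. Then the space Z^1(T, ρ) of 1-cocycles (functions u : T → V satisfying u(gh) = u(g) + ρ(g)u(h) for all g, h ∈ T) satisfies dim Z^1(T, ρ) = 2·dim V + i* − (dim V^x + dim V^y + dim V^{xy}). -/

import Mathlib

/-- The relations of the (a,b,c) triangle group: `x^a`, `y^b`, `(x*y)^c`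
in the free group on two generators. -/
def triangleRels (a b c : ℕ) : Set (FreeGroup (Fin 2)) :=
  {(FreeGroup.of 0) ^ a, (FreeGroup.of 1) ^ b, (FreeGroup.of 0 * FreeGroup.of 1) ^ c}

/-- The triangle group `T_{a,b,c} = ⟨x, y ∣ x^a = y^b = (xy)^c = 1⟩`. -/
abbrev TriangleGroup (a b c : ℕ) : Type :=
  PresentedGroup (triangleRels a b c)

/-- The generator `x` of the triangle group. -/
def TriangleGroup.x (a b c : ℕ) : TriangleGroup a b c := PresentedGroup.of 0

/-- The generator `y` of the triangle group. -/
def TriangleGroup.y (a b c : ℕ) : TriangleGroup a b c := PresentedGroup.of 1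

namespace Weil

open Module Finset

section General

variable {G : Type*} [Group G] {V : Type} [AddCommGroup V] [Module ℂ V]

/-- The norm endomorphism `∑_{i<n} ρ(g)^i`. -/
noncomputable def Nm (ρ : Representation ℂ G V) (g : G) (n : ℕ) : V →ₗ[ℂ] V :=
  ∑ i ∈ Finset.range n, ρ g ^ i

variable (ρ : Representation ℂ G V) {g : G} {n : ℕ}

theorem Nm_succ (v : V) : Nm ρ g (n + 1) v = Nm ρ g n v + (ρ g ^ n) v := by
  simp [Nm, Finset.sum_range_succ]

theorem mul_Nm (hg : g ^ n = 1) : ρ g * Nm ρ g n = Nm ρ g n := by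
  have h : (ρ g - 1) * Nm ρ g n = 0 := by
    rw [Nm, mul_geom_sum, ← map_pow, hg, map_one, sub_self]
  rw [sub_mul, one_mul, sub_eq_zero] at h
  exact h

theorem Nm_mul (hg : g ^ n = 1) : Nm ρ g n * ρ g = Nm ρ g n := by
  have h : Nm ρ g n * (ρ g - 1) = 0 := by
    rw [Nm, geom_sum_mul, ← map_pow, hg, map_one, sub_self]
  rw [mul_sub, mul_one, sub_eq_zero] at h
  exact h

theorem apply_Nm (hg : g ^ n = 1) (v : V) : ρ g (Nm ρ g n v) = Nm ρ g n v :=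
  LinearMap.congr_fun (mul_Nm ρ hg) v

theorem Nm_apply_rho (hg : g ^ n = 1) (v : V) : Nm ρ g n (ρ g v) = Nm ρ g n v :=
  LinearMap.congr_fun (Nm_mul ρ hg) v

theorem Nm_mem_ker (hg : g ^ n = 1) (v : V) : Nm ρ g n v ∈ LinearMap.ker (ρ g - 1) := by
  rw [LinearMap.mem_ker, LinearMap.sub_apply, Module.End.one_apply, sub_eq_zero]
  exact apply_Nm ρ hg v

theorem ker_fixed {v : V} (hv : v ∈ LinearMap.ker (ρ g - 1)) : ρ g v = v := by
  have := LinearMap.mem_ker.1 hv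
  rwa [LinearMap.sub_apply, Module.End.one_apply, sub_eq_zero] at this

theorem Nm_apply_fixed {v : V} (hv : ρ g v = v) : Nm ρ g n v = n • v := by
  have hp : ∀ i, (ρ g ^ i) v = v := by
    intro i
    induction i with
    | zero => simp
    | succ k ih => rw [pow_succ, Module.End.mul_apply, hv, ih]
  simp [Nm, LinearMap.sum_apply, hp, Finset.sum_const, Finset.card_range]

theorem Nm_inv_smul (hg : g ^ n = 1) (hn : (n : ℂ) ≠ 0) {v : V} (hv : ρ g v = v) :
    Nm ρ g n ((n : ℂ)⁻¹ • v) = v := by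
  rw [map_smul, Nm_apply_fixed ρ hv, ← Nat.cast_smul_eq_nsmul ℂ, smul_smul,
    inv_mul_cancel₀ hn, one_smul]

theorem invariant_apply_rho {f : Module.Dual ℂ V} (hf : f ∈ ρ.dual.invariants) (h : G) (v : V) :
    f (ρ h v) = f v := by
  have h1 := (Representation.mem_invariants _ f).1 hf h⁻¹
  rw [Representation.dual_apply, inv_inv, Module.Dual.transpose_apply] at h1
  exact LinearMap.congr_fun h1 v

theorem invariant_Nm_apply {f : Module.Dual ℂ V} (hf : f ∈ ρ.dual.invariants) (v : V) :
    f (Nm ρ g n v) = n • f v := by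
  rw [Nm, LinearMap.sum_apply, map_sum]
  have : ∀ i ∈ Finset.range n, f ((ρ g ^ i) v) = f v := by
    intro i _
    rw [← map_pow]
    exact invariant_apply_rho ρ hf _ v
  rw [Finset.sum_congr rfl this, Finset.sum_const, Finset.card_range]

/-- The semidirect product `V ⋊ G`. -/
@[ext]
structure SDP (ρ : Representation ℂ G V) where
  fst : V
  snd : G

namespace SDP

variable {ρ : Representation ℂ G V}

instance : Mul (SDP ρ) := ⟨fun p q => ⟨p.fst + ρ p.snd q.fst, p.snd * q.snd⟩⟩
instance : One (SDP ρ) := ⟨⟨0, 1⟩⟩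
instance : Inv (SDP ρ) := ⟨fun p => ⟨-(ρ p.snd⁻¹ p.fst), p.snd⁻¹⟩⟩

@[simp] theorem mul_fst (p q : SDP ρ) : (p * q).fst = p.fst + ρ p.snd q.fst := rfl
@[simp] theorem mul_snd (p q : SDP ρ) : (p * q).snd = p.snd * q.snd := rfl
@[simp] theorem one_fst : (1 : SDP ρ).fst = 0 := rfl
@[simp] theorem one_snd : (1 : SDP ρ).snd = 1 := rfl
@[simp] theorem inv_fst (p : SDP ρ) : (p⁻¹).fst = -(ρ p.snd⁻¹ p.fst) := rfl
@[simp] theorem inv_snd (p : SDP ρ) : (p⁻¹).snd = p.snd⁻¹ := rfl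

instance : Group (SDP ρ) where
  mul_assoc p q r := by ext <;> simp [map_mul, map_add, add_assoc, mul_assoc]
  one_mul p := by ext <;> simp
  mul_one p := by ext <;> simp
  inv_mul_cancel p := by ext <;> simp

theorem pow_mk (v : V) (g : G) (n : ℕ) : (SDP.mk v g : SDP ρ) ^ n = ⟨Nm ρ g n v, g ^ n⟩ := by
  induction n with
  | zero => ext <;> simp [Nm]
  | succ k ih =>
    rw [pow_succ, ih]
    ext
    · simp [Nm_succ, map_pow]
    · simp [pow_succ]

/-- Projection to the second factor. -/
def proj : SDP ρ →* G :=
  { toFun := SDP.snd, map_one' := rfl, map_mul' := fun _ _ => rfl }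

@[simp] theorem proj_apply (p : SDP ρ) : proj p = p.snd := rfl

end SDP

end General

section Triangle

variable {a b c : ℕ}

theorem relX : (TriangleGroup.x a b c) ^ a = 1 := by
  show (PresentedGroup.mk _ (FreeGroup.of 0)) ^ a = 1
  rw [← map_pow]
  exact (QuotientGroup.eq_one_iff _).2 (Subgroup.subset_normalClosure (Set.mem_insert _ _))

theorem relY : (TriangleGroup.y a b c) ^ b = 1 := by
  show (PresentedGroup.mk _ (FreeGroup.of 1)) ^ b = 1
  rw [← map_pow]
  exact (QuotientGroup.eq_one_iff _).2 (Subgroup.subset_normalClosure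
    (Set.mem_insert_of_mem _ (Set.mem_insert _ _)))

theorem relZ : (TriangleGroup.x a b c * TriangleGroup.y a b c) ^ c = 1 := by
  show (PresentedGroup.mk _ (FreeGroup.of 0) * PresentedGroup.mk _ (FreeGroup.of 1)) ^ c = 1
  rw [← map_mul, ← map_pow]
  exact (QuotientGroup.eq_one_iff _).2 (Subgroup.subset_normalClosure
    (Set.mem_insert_of_mem _ (Set.mem_insert_of_mem _ rfl)))

theorem mem_of_sub (S : Subgroup (TriangleGroup a b c)) (hx : TriangleGroup.x a b c ∈ S)
    (hy : TriangleGroup.y a b c ∈ S) (t : TriangleGroup a b c) : t ∈ S := by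
  have hr : Set.range (PresentedGroup.of : Fin 2 → TriangleGroup a b c)
      = {TriangleGroup.x a b c, TriangleGroup.y a b c} := by
    ext t
    simp only [Set.mem_range, Set.mem_insert_iff, Set.mem_singleton_iff]
    constructor
    · rintro ⟨i, rfl⟩
      fin_cases i
      · left; rfl
      · right; rfl
    · rintro (rfl | rfl)
      exacts [⟨0, rfl⟩, ⟨1, rfl⟩]
  have hclos : Subgroup.closure ({TriangleGroup.x a b c, TriangleGroup.y a b c} :
      Set (TriangleGroup a b c)) = ⊤ := by
    rw [← hr]; exact PresentedGroup.closure_range_of _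
  have hle : Subgroup.closure ({TriangleGroup.x a b c, TriangleGroup.y a b c} :
      Set (TriangleGroup a b c)) ≤ S := by
    rw [Subgroup.closure_le]
    rintro t' (rfl | rfl)
    · exact hx
    · exact hy
  rw [hclos] at hle
  exact hle (Subgroup.mem_top t)

variable {V : Type} [AddCommGroup V] [Module ℂ V]
variable (a b c)
variable (ρ : Representation ℂ (TriangleGroup a b c) V)

/-- The norm map, corestricted to the fixed space. -/
noncomputable def NK (g : TriangleGroup a b c) (n : ℕ) (hg : g ^ n = 1) :
    V →ₗ[ℂ] ↥(LinearMap.ker (ρ g - 1)) :=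
  LinearMap.codRestrict _ (Nm ρ g n) (Nm_mem_ker ρ hg)

@[simp] theorem NK_coe (g : TriangleGroup a b c) (n : ℕ) (hg : g ^ n = 1) (v : V) :
    (NK a b c ρ g n hg v : V) = Nm ρ g n v := rfl

/-- The Fox-derivative map whose kernel is (isomorphic to) the space of 1-cocycles. -/
noncomputable def Phi :
    V × V →ₗ[ℂ]
      ↥(LinearMap.ker (ρ (TriangleGroup.x a b c) - 1)) ×
        ↥(LinearMap.ker (ρ (TriangleGroup.y a b c) - 1)) ×
          ↥(LinearMap.ker (ρ (TriangleGroup.x a b c * TriangleGroup.y a b c) - 1)) :=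
  LinearMap.prod ((NK a b c ρ _ a relX).comp (LinearMap.fst ℂ V V))
    (LinearMap.prod ((NK a b c ρ _ b relY).comp (LinearMap.snd ℂ V V))
      ((NK a b c ρ _ c relZ).comp
        (LinearMap.fst ℂ V V + (ρ (TriangleGroup.x a b c)).comp (LinearMap.snd ℂ V V))))

theorem Phi_apply (v w : V) :
    Phi a b c ρ (v, w) =
      (NK a b c ρ _ a relX v, NK a b c ρ _ b relY w,
        NK a b c ρ _ c relZ (v + ρ (TriangleGroup.x a b c) w)) := rfl

open groupCohomology in
theorem cocycle_pow (u : cocycles₁ (Rep.of ρ)) (g : TriangleGroup a b c) (n : ℕ) :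
    (u : TriangleGroup a b c → V) (g ^ n) = Nm ρ g n ((u : TriangleGroup a b c → V) g) := by
  induction n with
  | zero =>
    rw [pow_zero]
    have h0 : (u : TriangleGroup a b c → V) 1 = 0 := cocycles₁_map_one u
    rw [h0]
    simp [Nm]
  | succ k ih =>
    rw [pow_succ]
    rw [(mem_cocycles₁_iff (u : TriangleGroup a b c → V)).1 u.2 (g ^ k) g]
    rw [ih, Nm_succ]
    show ρ (g ^ k) _ + _ = _
    rw [map_pow, add_comm]

open groupCohomology in
theorem finrank_cocycles₁_eq :
    finrank ℂ (cocycles₁ (Rep.of ρ)) = finrank ℂ (LinearMap.ker (Phi a b c ρ)) := by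
  classical
  set gx := TriangleGroup.x a b c with hgx
  set gy := TriangleGroup.y a b c with hgy
  let E : ↥(cocycles₁ (Rep.of ρ)) →ₗ[ℂ] V × V :=
    { toFun := fun u => ((u : TriangleGroup a b c → V) gx, (u : TriangleGroup a b c → V) gy)
      map_add' := fun u v => rfl
      map_smul' := fun r u => rfl }
  have hE : Function.Injective E := by
    rw [← LinearMap.ker_eq_bot, LinearMap.ker_eq_bot']
    intro u hu
    have hx : (u : TriangleGroup a b c → V) gx = 0 := congrArg Prod.fst hu
    have hy : (u : TriangleGroup a b c → V) gy = 0 := congrArg Prod.snd hu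
    let S : Subgroup (TriangleGroup a b c) :=
      { carrier := {g | (u : TriangleGroup a b c → V) g = 0}
        one_mem' := cocycles₁_map_one u
        mul_mem' := by
          intro g h hg hh
          show (u : TriangleGroup a b c → V) (g * h) = 0
          rw [(mem_cocycles₁_iff (u : TriangleGroup a b c → V)).1 u.2 g h]
          rw [show (u : TriangleGroup a b c → V) h = 0 from hh,
            show (u : TriangleGroup a b c → V) g = 0 from hg]
          simp
        inv_mem' := by
          intro g hg
          have h0 : (⇑u : TriangleGroup a b c → V) g = 0 := hg
          have h1 := cocycles₁_map_inv u g
          rw [h0, neg_zero] at h1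
          show (⇑u : TriangleGroup a b c → V) g⁻¹ = 0
          calc (⇑u : TriangleGroup a b c → V) g⁻¹
              = (Rep.of ρ).ρ g⁻¹ ((Rep.of ρ).ρ g ((⇑u : TriangleGroup a b c → V) g⁻¹)) :=
                (Representation.inv_self_apply (Rep.of ρ).ρ g _).symm
            _ = 0 := by rw [h1, map_zero] }
    have := fun t => mem_of_sub S hx hy t
    exact Subtype.ext (funext this)
  have hrange : LinearMap.range E = LinearMap.ker (Phi a b c ρ) := by
    ext p
    obtain ⟨v, w⟩ := p
    constructor
    · rintro ⟨u, hu⟩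
      have huv : (u : TriangleGroup a b c → V) gx = v := congrArg Prod.fst hu
      have huw : (u : TriangleGroup a b c → V) gy = w := congrArg Prod.snd hu
      rw [LinearMap.mem_ker, Phi_apply]
      have h1 : Nm ρ gx a v = 0 := by
        rw [← huv, ← cocycle_pow, relX, cocycles₁_map_one]
      have h2 : Nm ρ gy b w = 0 := by
        rw [← huw, ← cocycle_pow, relY, cocycles₁_map_one]
      have h3 : Nm ρ (gx * gy) c (v + ρ gx w) = 0 := by
        have hxy : v + ρ gx w = (u : TriangleGroup a b c → V) (gx * gy) := by
          rw [(mem_cocycles₁_iff (u : TriangleGroup a b c → V)).1 u.2 gx gy, huv, huw, add_comm]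
        rw [hxy, ← cocycle_pow, relZ, cocycles₁_map_one]
      exact Prod.ext (Subtype.ext h1) (Prod.ext (Subtype.ext h2) (Subtype.ext h3))
    · intro hp
      rw [LinearMap.mem_ker, Phi_apply] at hp
      have h1 : Nm ρ gx a v = 0 := congrArg (fun q => (q.1 : V)) hp
      have h2 : Nm ρ gy b w = 0 := congrArg (fun q => (q.2.1 : V)) hp
      have h3 : Nm ρ (gx * gy) c (v + ρ gx w) = 0 := congrArg (fun q => (q.2.2 : V)) hp
      let f : Fin 2 → SDP ρ := ![⟨v, gx⟩, ⟨w, gy⟩]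
      have hrel : ∀ r ∈ triangleRels a b c, FreeGroup.lift f r = 1 := by
        intro r hr
        simp only [triangleRels, Set.mem_insert_iff, Set.mem_singleton_iff] at hr
        rcases hr with rfl | rfl | rfl
        · rw [map_pow, FreeGroup.lift_apply_of]
          show (SDP.mk v gx : SDP ρ) ^ a = 1
          rw [SDP.pow_mk, h1, relX]; rfl
        · rw [map_pow, FreeGroup.lift_apply_of]
          show (SDP.mk w gy : SDP ρ) ^ b = 1
          rw [SDP.pow_mk, h2, relY]; rfl
        · rw [map_pow, map_mul, FreeGroup.lift_apply_of, FreeGroup.lift_apply_of]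
          show ((SDP.mk v gx : SDP ρ) * SDP.mk w gy) ^ c = 1
          have : (SDP.mk v gx : SDP ρ) * SDP.mk w gy = SDP.mk (v + ρ gx w) (gx * gy) := rfl
          rw [this, SDP.pow_mk, h3, relZ]; rfl
      let φ : TriangleGroup a b c →* SDP ρ := PresentedGroup.toGroup hrel
      have hsnd : ∀ t, (φ t).snd = t := by
        have h : SDP.proj.comp φ = MonoidHom.id _ := by
          apply PresentedGroup.ext
          intro i
          fin_cases i <;>
            simp only [MonoidHom.comp_apply, MonoidHom.id_apply, PresentedGroup.toGroup.of, φ] <;>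
              rfl
        intro t
        exact DFunLike.congr_fun h t
      let u : TriangleGroup a b c → V := fun t => (φ t).fst
      have hu : u ∈ cocycles₁ (Rep.of ρ) := by
        rw [mem_cocycles₁_iff]
        intro g h
        show (φ (g * h)).fst = ρ g ((φ h).fst) + (φ g).fst
        rw [map_mul, SDP.mul_fst, hsnd g, add_comm]
      refine ⟨⟨u, hu⟩, ?_⟩
      have hux : u gx = v := by
        show (φ (PresentedGroup.of 0)).fst = v
        rw [PresentedGroup.toGroup.of]
        rfl
      have huy : u gy = w := by
        show (φ (PresentedGroup.of 1)).fst = w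
        rw [PresentedGroup.toGroup.of]
        rfl
      exact Prod.ext hux huy
  calc finrank ℂ (cocycles₁ (Rep.of ρ)) = finrank ℂ (LinearMap.range E) :=
        (LinearEquiv.ofInjective E hE).finrank_eq
    _ = finrank ℂ (LinearMap.ker (Phi a b c ρ)) := by rw [hrange]


theorem finrank_ker_dualMap (ha : (a : ℂ) ≠ 0) (hb : (b : ℂ) ≠ 0) (hc : (c : ℂ) ≠ 0) :
    finrank ℂ (LinearMap.ker (Phi a b c ρ).dualMap) = finrank ℂ ρ.dual.invariants := by
  classical
  set gx := TriangleGroup.x a b c with hgx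
  set gy := TriangleGroup.y a b c with hgy
  let Kx := LinearMap.ker (ρ gx - 1)
  let Ky := LinearMap.ker (ρ gy - 1)
  let Kz := LinearMap.ker (ρ (gx * gy) - 1)
  let NKx : V →ₗ[ℂ] ↥Kx := NK a b c ρ gx a relX
  let NKy : V →ₗ[ℂ] ↥Ky := NK a b c ρ gy b relY
  let NKz : V →ₗ[ℂ] ↥Kz := NK a b c ρ (gx * gy) c relZ
  let i1 : ↥Kx →ₗ[ℂ] ↥Kx × ↥Ky × ↥Kz := LinearMap.inl ℂ ↥Kx (↥Ky × ↥Kz)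
  let i2 : ↥Ky →ₗ[ℂ] ↥Kx × ↥Ky × ↥Kz :=
    (LinearMap.inr ℂ ↥Kx (↥Ky × ↥Kz)).comp (LinearMap.inl ℂ ↥Ky ↥Kz)
  let i3 : ↥Kz →ₗ[ℂ] ↥Kx × ↥Ky × ↥Kz :=
    (LinearMap.inr ℂ ↥Kx (↥Ky × ↥Kz)).comp (LinearMap.inr ℂ ↥Ky ↥Kz)
  let F0 : Module.Dual ℂ (↥Kx × ↥Ky × ↥Kz) →ₗ[ℂ] Module.Dual ℂ V := (i3.comp NKz).dualMap
  have hF0 : ∀ (ψ : Module.Dual ℂ (↥Kx × ↥Ky × ↥Kz)) (v : V), F0 ψ v = ψ (i3 (NKz v)) :=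
    fun ψ v => rfl
  have hdecomp : ∀ (ψ : Module.Dual ℂ (↥Kx × ↥Ky × ↥Kz)) (s : ↥Kx) (t : ↥Ky) (u' : ↥Kz),
      ψ (s, t, u') = ψ (i1 s) + ψ (i2 t) + ψ (i3 u') := by
    intro ψ s t u'
    rw [← map_add, ← map_add]
    congr 1
    show (s, t, u') = ((s + 0) + 0, ((0 + t) + 0, (0 + 0) + u'))
    simp
  have hMain : ∀ ψ : Module.Dual ℂ (↥Kx × ↥Ky × ↥Kz), (Phi a b c ρ).dualMap ψ = 0 →
      F0 ψ ∈ ρ.dual.invariants ∧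
        ∀ (s : ↥Kx) (t : ↥Ky) (u' : ↥Kz),
          ψ (s, t, u') = -((a : ℂ)⁻¹ * F0 ψ s) + -((b : ℂ)⁻¹ * F0 ψ t) + (c : ℂ)⁻¹ * F0 ψ u' := by
    intro ψ hψ
    have hk : ∀ v w : V, ψ (NKx v, NKy w, NKz (v + ρ gx w)) = 0 := by
      intro v w
      exact LinearMap.congr_fun hψ (v, w)
    have h0 : ∀ v : V, ψ (i1 (NKx v)) + ψ (i3 (NKz v)) = 0 := by
      intro v
      have h := hk v 0
      simp only [map_zero, add_zero] at h
      rw [hdecomp ψ (NKx v) 0 (NKz v), map_zero, map_zero, add_zero] at h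
      exact h
    have h1 : ∀ w : V, ψ (i2 (NKy w)) + ψ (i3 (NKz (ρ gx w))) = 0 := by
      intro w
      have h := hk 0 w
      simp only [map_zero, zero_add] at h
      rw [hdecomp ψ 0 (NKy w) (NKz (ρ gx w)), map_zero, map_zero, zero_add] at h
      exact h
    have hfX : ∀ v : V, F0 ψ (ρ gx v) = F0 ψ v := by
      intro v
      have e1 := h0 (ρ gx v)
      have e2 := h0 v
      rw [show NKx (ρ gx v) = NKx v from Subtype.ext (Nm_apply_rho ρ relX v)] at e1
      rw [hF0, hF0]
      linear_combination e1 - e2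
    have hfY : ∀ w : V, F0 ψ (ρ gy w) = F0 ψ w := by
      intro w
      have e1 := h1 (ρ gy w)
      have e2 := h1 w
      rw [show NKy (ρ gy w) = NKy w from Subtype.ext (Nm_apply_rho ρ relY w)] at e1
      have h3 : F0 ψ (ρ gx (ρ gy w)) = F0 ψ (ρ gx w) := by
        rw [hF0, hF0]
        linear_combination e1 - e2
      calc F0 ψ (ρ gy w) = F0 ψ (ρ gx (ρ gy w)) := (hfX (ρ gy w)).symm
        _ = F0 ψ (ρ gx w) := h3
        _ = F0 ψ w := hfX w
    have hinv : ∀ (g : TriangleGroup a b c) (v : V), F0 ψ (ρ g v) = F0 ψ v := by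
      let S : Subgroup (TriangleGroup a b c) :=
        { carrier := {g | ∀ v : V, F0 ψ (ρ g v) = F0 ψ v}
          one_mem' := by
            intro v
            rw [map_one, Module.End.one_apply]
          mul_mem' := by
            intro g h hgm hhm
            intro v
            rw [map_mul, Module.End.mul_apply, hgm (ρ h v), hhm v]
          inv_mem' := by
            intro g hgm
            intro v
            have h := hgm (ρ g⁻¹ v)
            rw [← Module.End.mul_apply, ← map_mul, mul_inv_cancel, map_one,
              Module.End.one_apply] at h
            exact h.symm }
      intro g v
      exact mem_of_sub S hfX hfY g v
    constructor
    · rw [Representation.mem_invariants]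
      intro g
      apply LinearMap.ext
      intro v
      rw [Representation.dual_apply, Module.Dual.transpose_apply, LinearMap.comp_apply]
      exact hinv g⁻¹ v
    · intro s t u'
      have hs : ψ (i1 s) = -((a : ℂ)⁻¹ * F0 ψ s) := by
        have e := h0 ((a : ℂ)⁻¹ • (s : V))
        rw [show NKx ((a : ℂ)⁻¹ • (s : V)) = s from
          Subtype.ext (Nm_inv_smul ρ relX ha (ker_fixed ρ s.2))] at e
        rw [← hF0, map_smul, smul_eq_mul] at e
        linear_combination e
      have ht : ψ (i2 t) = -((b : ℂ)⁻¹ * F0 ψ t) := by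
        have e := h1 ((b : ℂ)⁻¹ • (t : V))
        rw [show NKy ((b : ℂ)⁻¹ • (t : V)) = t from
          Subtype.ext (Nm_inv_smul ρ relY hb (ker_fixed ρ t.2))] at e
        rw [← hF0, map_smul, map_smul, smul_eq_mul, hfX] at e
        linear_combination e
      have hu : ψ (i3 u') = (c : ℂ)⁻¹ * F0 ψ u' := by
        have e : NKz ((c : ℂ)⁻¹ • (u' : V)) = u' :=
          Subtype.ext (Nm_inv_smul ρ relZ hc (ker_fixed ρ u'.2))
        have e2 : F0 ψ ((c : ℂ)⁻¹ • (u' : V)) = ψ (i3 u') := by rw [hF0, e]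
        rw [map_smul, smul_eq_mul] at e2
        linear_combination -e2
      rw [hdecomp ψ s t u', hs, ht, hu]
  let Fmap : ↥(LinearMap.ker (Phi a b c ρ).dualMap) →ₗ[ℂ] ↥ρ.dual.invariants :=
    LinearMap.codRestrict _ (F0.comp (LinearMap.ker (Phi a b c ρ).dualMap).subtype)
      (fun ψ => (hMain ψ.1 (LinearMap.mem_ker.mp ψ.2)).1)
  have hbij : Function.Bijective Fmap := by
    constructor
    · rw [← LinearMap.ker_eq_bot, LinearMap.ker_eq_bot']
      intro ψ hψ0
      have hF : F0 ψ.1 = 0 := congrArg Subtype.val hψ0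
      apply Subtype.ext
      apply LinearMap.ext
      intro p
      obtain ⟨s, t, u'⟩ := p
      rw [(hMain ψ.1 (LinearMap.mem_ker.mp ψ.2)).2 s t u', hF]
      simp only [LinearMap.zero_apply, mul_zero, neg_zero, add_zero, zero_add,
        ZeroMemClass.coe_zero]
    · rintro ⟨f, hf⟩
      let ψf : Module.Dual ℂ (↥Kx × ↥Ky × ↥Kz) :=
        (-(a : ℂ)⁻¹) • (f.comp (Kx.subtype.comp (LinearMap.fst ℂ ↥Kx (↥Ky × ↥Kz))))
        + (-(b : ℂ)⁻¹) • (f.comp (Ky.subtype.comp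
            ((LinearMap.fst ℂ ↥Ky ↥Kz).comp (LinearMap.snd ℂ ↥Kx (↥Ky × ↥Kz)))))
        + ((c : ℂ)⁻¹) • (f.comp (Kz.subtype.comp
            ((LinearMap.snd ℂ ↥Ky ↥Kz).comp (LinearMap.snd ℂ ↥Kx (↥Ky × ↥Kz)))))
      have hψf_apply : ∀ (s : ↥Kx) (t : ↥Ky) (u' : ↥Kz),
          ψf (s, t, u') = -((a : ℂ)⁻¹ * f s) + -((b : ℂ)⁻¹ * f t) + (c : ℂ)⁻¹ * f u' := by
        intro s t u'
        show (-(a : ℂ)⁻¹) • f s + (-(b : ℂ)⁻¹) • f t + ((c : ℂ)⁻¹) • f u' = _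
        simp [smul_eq_mul]
      have hψf_ker : ψf ∈ LinearMap.ker (Phi a b c ρ).dualMap := by
        rw [LinearMap.mem_ker]
        apply LinearMap.ext
        intro vw
        obtain ⟨v, w⟩ := vw
        have h : ψf (Phi a b c ρ (v, w)) = 0 := by
          rw [Phi_apply, hψf_apply]
          show -((a : ℂ)⁻¹ * f (Nm ρ gx a v)) + -((b : ℂ)⁻¹ * f (Nm ρ gy b w))
              + (c : ℂ)⁻¹ * f (Nm ρ (gx * gy) c (v + ρ gx w)) = 0
          rw [invariant_Nm_apply ρ hf v, invariant_Nm_apply ρ hf w,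
            invariant_Nm_apply ρ hf (v + ρ gx w), map_add, invariant_apply_rho ρ hf gx w]
          rw [nsmul_eq_mul, nsmul_eq_mul, nsmul_eq_mul]
          field_simp
          ring
        exact h
      refine ⟨⟨ψf, hψf_ker⟩, ?_⟩
      apply Subtype.ext
      apply LinearMap.ext
      intro v
      show F0 ψf v = f v
      rw [hF0]
      have : i3 (NKz v) = ((0 : ↥Kx), (0 : ↥Ky), NKz v) := rfl
      rw [this, hψf_apply 0 0 (NKz v)]
      show -((a : ℂ)⁻¹ * f 0) + -((b : ℂ)⁻¹ * f 0) + (c : ℂ)⁻¹ * f (Nm ρ (gx * gy) c v) = f v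
      rw [map_zero, invariant_Nm_apply ρ hf v, nsmul_eq_mul]
      field_simp
      ring
  exact LinearEquiv.finrank_eq (LinearEquiv.ofBijective Fmap hbij)

end Triangle

end Weil

open Module groupCohomology in
/-- Weil's formula for the dimension of the space of `1`-cocycles of a representation of a
hyperbolic triangle group on a finite-dimensional complex vector space. -/
theorem dim_oneCocycles_triangleGroup (a b c : ℕ) (ha : 2 ≤ a) (hb : 2 ≤ b) (hc : 2 ≤ c)
    (hhyp : (1 : ℚ) / a + 1 / b + 1 / c < 1)
    (V : Type) [AddCommGroup V] [Module ℂ V] [FiniteDimensional ℂ V]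
    (ρ : Representation ℂ (TriangleGroup a b c) V) :
    (finrank ℂ (cocycles₁ (Rep.of ρ)) : ℤ) =
      2 * finrank ℂ V + finrank ℂ ρ.dual.invariants -
        (finrank ℂ (LinearMap.ker (ρ (TriangleGroup.x a b c) - 1)) +
         finrank ℂ (LinearMap.ker (ρ (TriangleGroup.y a b c) - 1)) +
         finrank ℂ (LinearMap.ker (ρ (TriangleGroup.x a b c * TriangleGroup.y a b c) - 1))) := by
  classical
  have ha' : (a : ℂ) ≠ 0 := Nat.cast_ne_zero.2 (by omega)
  have hb' : (b : ℂ) ≠ 0 := Nat.cast_ne_zero.2 (by omega)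
  have hc' : (c : ℂ) ≠ 0 := Nat.cast_ne_zero.2 (by omega)
  have e1 := Weil.finrank_cocycles₁_eq a b c ρ
  have e2 := LinearMap.finrank_range_add_finrank_ker (Weil.Phi a b c ρ)
  have e3 := LinearMap.finrank_range_add_finrank_ker (Weil.Phi a b c ρ).dualMap
  have e4 := LinearMap.finrank_range_dualMap_eq_finrank_range (Weil.Phi a b c ρ)
  have e5 := Weil.finrank_ker_dualMap a b c ρ ha' hb' hc'
  rw [Module.finrank_prod] at e2
  rw [Subspace.dual_finrank_eq, Module.finrank_prod, Module.finrank_prod] at e3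
  omega
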